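/- Let κ₀ ∈ ℝ and κ ∈ ℝ^d, and let c be a nonzero N-fermion coefficient vector such that every configuration s in the support of c satisfies κ₀ + Σ_{j∈s} κ_j = 0. Then there exists a unitary d×d matrix u with u_{jl} = 0 whenever κ_j ≠ κ_l, such that: (i) ρ₁(u·c) is diagonal; (ii) every configuration s in the support of u·c satisfies κ₀ + Σ_{j∈s} κ_j = 0; and (iii) ρ₁(u·c)_{jj} ≥ ρ₁(u·c)_{ll} for all indices j < l with κ_j = κ_l. -/

import Mathlib

open scoped BigOperators

noncomputable section

/-- An `N`-element configuration: an `N`-element subset of `Fin d`. -/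
abbrev Config (N d : ℕ) := {s : Finset (Fin d) // s.card = N}

/-- An `N`-fermion coefficient vector. -/
abbrev CoeffVec (N d : ℕ) : Type := Config N d → ℂ

/-- Inner product on coefficient vectors, conjugate-linear in the first argument. -/
def cinner {N d : ℕ} (x y : CoeffVec N d) : ℂ := ∑ s : Config N d, star (x s) * y s

/-- Normalization of a coefficient vector. -/
def Normalized {N d : ℕ} (c : CoeffVec N d) : Prop := ∑ s : Config N d, ‖c s‖ ^ 2 = 1

/-- The occupation vector of a configuration `s`. -/
def occVec {N d : ℕ} (s : Config N d) : Fin d → ℝ := fun j => if j ∈ s.val then 1 else 0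

/-- Occupation numbers `n_j(c) = ∑_{s : j ∈ s} |c_s|²`. -/
def occ {N d : ℕ} (c : CoeffVec N d) (j : Fin d) : ℝ :=
  ∑ s : Config N d, if j ∈ s.val then ‖c s‖ ^ 2 else 0

/-- Embedding of a coefficient vector into the full Fock space of `Fin d`. -/
def embed {N d : ℕ} (c : CoeffVec N d) : Finset (Fin d) → ℂ :=
  fun s => if h : s.card = N then c ⟨s, h⟩ else 0

/-- The annihilation operator `f_k` on Fock-space coefficient functions. -/
def annih {d : ℕ} (k : Fin d) (x : Finset (Fin d) → ℂ) : Finset (Fin d) → ℂ :=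
  fun t => if k ∈ t then 0
    else (-1 : ℂ) ^ (t.filter (fun m => m < k)).card * x (insert k t)

/-- The creation operator `f_j†` on Fock-space coefficient functions. -/
def create {d : ℕ} (j : Fin d) (x : Finset (Fin d) → ℂ) : Finset (Fin d) → ℂ :=
  fun s => if j ∈ s
    then (-1 : ℂ) ^ (((s.erase j).filter (fun m => m < j)).card) * x (s.erase j)
    else 0

/-- The matrix-valued sesquilinear form `B(x,y)_{jk} = ⟨x, f_k† f_j y⟩`. -/
def Bform {N d : ℕ} (x y : CoeffVec N d) : Matrix (Fin d) (Fin d) ℂ :=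
  Matrix.of fun j k => ∑ s : Finset (Fin d), star (embed x s) * create k (annih j (embed y)) s

/-- The one-particle reduced density matrix `ρ₁(c)_{jk} = ⟨c, f_k† f_j c⟩`. -/
def rho1 {N d : ℕ} (c : CoeffVec N d) : Matrix (Fin d) (Fin d) ℂ := Bform c c

/-- The induced one-body operator `ĥ = ∑_{j,l} h_{jl} f_j† f_l` on Fock space. -/
def oneBody {d : ℕ} (h : Matrix (Fin d) (Fin d) ℂ) (x : Finset (Fin d) → ℂ) :
    Finset (Fin d) → ℂ :=
  fun s => ∑ j : Fin d, ∑ l : Fin d, h j l * create j (annih l x) s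

/-- The induced one-body operator `ĥ` acting on `N`-fermion coefficient vectors. -/
def oneBodyC {N d : ℕ} (h : Matrix (Fin d) (Fin d) ℂ) (c : CoeffVec N d) : CoeffVec N d :=
  fun s => oneBody h (embed c) s.val

/-- Action of a `d×d` matrix `u` on coefficient vectors by the `N`-th compound matrix
(i.e. the action of `u ∧ … ∧ u` on the Slater-determinant basis). -/
def compAct {N d : ℕ} (u : Matrix (Fin d) (Fin d) ℂ) (c : CoeffVec N d) : CoeffVec N d :=
  fun s => ∑ t : Config N d,
    (Matrix.of fun a b : Fin N =>
      u (↑(s.val.orderIsoOfFin s.2 a)) (↑(t.val.orderIsoOfFin t.2 b))).det * c t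

open Matrix

namespace Stmt6

variable {d : ℕ}

def finner (x y : Finset (Fin d) → ℂ) : ℂ := ∑ s : Finset (Fin d), star (x s) * y s

lemma star_finner (x y : Finset (Fin d) → ℂ) : star (finner x y) = finner y x := by
  simp [finner, star_sum, mul_comm]

lemma sum_supported (k : Fin d) (g : Finset (Fin d) → ℂ) (h0 : ∀ s, k ∈ s → g s = 0) :
    ∑ s : Finset (Fin d), g s
      = ∑ t ∈ Finset.univ.filter (fun t : Finset (Fin d) => k ∉ t), g t := by
  classical
  rw [← Finset.sum_filter_add_sum_filter_not Finset.univ (fun s => k ∉ s) g]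
  have h2 : ∑ s ∈ Finset.univ.filter (fun s : Finset (Fin d) => ¬ k ∉ s), g s = 0 :=
    Finset.sum_eq_zero (fun s hs => h0 s (not_not.mp (by simpa using (Finset.mem_filter.mp hs).2)))
  rw [h2, add_zero]

lemma sum_insert_reindex (k : Fin d) (g : Finset (Fin d) → ℂ) (h0 : ∀ s, k ∉ s → g s = 0) :
    ∑ s : Finset (Fin d), g s
      = ∑ t ∈ Finset.univ.filter (fun t : Finset (Fin d) => k ∉ t), g (insert k t) := by
  classical
  rw [← Finset.sum_filter_add_sum_filter_not Finset.univ (fun s => k ∈ s) g]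
  have h2 : ∑ s ∈ Finset.univ.filter (fun s : Finset (Fin d) => ¬ k ∈ s), g s = 0 :=
    Finset.sum_eq_zero (fun s hs => h0 s (by simpa using (Finset.mem_filter.mp hs).2))
  rw [h2, add_zero]
  refine Finset.sum_bij' (fun s _ => s.erase k) (fun t _ => insert k t) ?_ ?_ ?_ ?_ ?_
  · intro s hs; simp [Finset.mem_filter]
  · intro t ht
    simp only [Finset.mem_filter, Finset.mem_univ, true_and] at ht ⊢
    exact Finset.mem_insert_self k t
  · intro s hs
    exact Finset.insert_erase (by simpa using (Finset.mem_filter.mp hs).2)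
  · intro t ht
    exact Finset.erase_insert (by simpa using (Finset.mem_filter.mp ht).2)
  · intro s hs
    rw [Finset.insert_erase (by simpa using (Finset.mem_filter.mp hs).2)]

lemma finner_create (k : Fin d) (x y : Finset (Fin d) → ℂ) :
    finner x (create k y) = finner (annih k x) y := by
  classical
  unfold finner
  rw [sum_insert_reindex k (fun s => star (x s) * create k y s)
    (fun s hs => by simp [create, hs])]
  rw [sum_supported k (fun t => star (annih k x t) * y t)
    (fun t ht => by simp [annih, ht])]
  refine Finset.sum_congr rfl (fun t ht => ?_)
  have hkt : k ∉ t := by simpa using (Finset.mem_filter.mp ht).2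
  have hmem : k ∈ insert k t := Finset.mem_insert_self k t
  simp only [create, annih, if_pos hmem, if_neg hkt, Finset.erase_insert hkt]
  rw [star_mul', star_pow]
  simp only [star_neg, star_one]
  ring

lemma create_annih_same (j : Fin d) (x : Finset (Fin d) → ℂ) (s : Finset (Fin d)) :
    create j (annih j x) s = if j ∈ s then x s else 0 := by
  classical
  by_cases hj : j ∈ s
  · have hje : j ∉ s.erase j := Finset.notMem_erase j s
    simp only [create, annih, if_pos hj, if_neg hje, Finset.insert_erase hj]
    rw [← mul_assoc, ← pow_add]
    have : ((-1 : ℂ)) ^ (((s.erase j).filter (fun m => m < j)).card +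
        ((s.erase j).filter (fun m => m < j)).card) = 1 := by
      rw [← two_mul, pow_mul]
      norm_num
    rw [this, one_mul]

  · simp [create, hj]



def subdet (u : Matrix (Fin d) (Fin d) ℂ) (s t : Finset (Fin d)) : ℂ :=
  if h : t.card = s.card then
    (Matrix.of fun a b : Fin s.card => u (s.orderEmbOfFin rfl a) (t.orderEmbOfFin h b)).det
  else 0

lemma subdet_eq (u : Matrix (Fin d) (Fin d) ℂ) {s t : Finset (Fin d)} {n : ℕ}
    (hs : s.card = n) (ht : t.card = n) :
    subdet u s t
      = (Matrix.of fun a b : Fin n => u (s.orderEmbOfFin hs a) (t.orderEmbOfFin ht b)).det := by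
  subst hs
  rw [subdet, dif_pos ht]

lemma subdet_ne (u : Matrix (Fin d) (Fin d) ℂ) {s t : Finset (Fin d)}
    (h : t.card ≠ s.card) : subdet u s t = 0 := dif_neg h

lemma orderEmbOfFin_congr {s t : Finset (Fin d)} (hst : s = t) {n : ℕ}
    (hs : s.card = n) (ht : t.card = n) (a : Fin n) :
    s.orderEmbOfFin hs a = t.orderEmbOfFin ht a := by subst hst; rfl

lemma orderEmbOfFin_erase {s : Finset (Fin d)} {n : ℕ} (hs : s.card = n + 1) {j : Fin d}
    (hj : j ∈ s) {i : Fin (n+1)} (hij : s.orderEmbOfFin hs i = j)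
    (he : (s.erase j).card = n) (a : Fin n) :
    (s.erase j).orderEmbOfFin he a = s.orderEmbOfFin hs (i.succAbove a) := by
  have hmono : StrictMono (fun a : Fin n => s.orderEmbOfFin hs (i.succAbove a)) :=
    (s.orderEmbOfFin hs).strictMono.comp (Fin.strictMono_succAbove i)
  have hmem : ∀ a : Fin n, s.orderEmbOfFin hs (i.succAbove a) ∈ s.erase j := by
    intro a
    refine Finset.mem_erase.mpr ⟨?_, Finset.orderEmbOfFin_mem s hs _⟩
    rw [← hij]
    intro hcontra
    exact (Fin.succAbove_ne i a) ((s.orderEmbOfFin hs).injective hcontra)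
  have huniq := Finset.orderEmbOfFin_unique he hmem hmono
  exact (congrFun huniq a).symm

lemma card_filter_lt_orderEmbOfFin {s : Finset (Fin d)} {n : ℕ} (hs : s.card = n) (i : Fin n) :
    (s.filter (fun m => m < s.orderEmbOfFin hs i)).card = (i : ℕ) := by
  classical
  have himg : s.filter (fun m => m < s.orderEmbOfFin hs i)
      = (Finset.univ.filter (fun a : Fin n => a < i)).image (s.orderEmbOfFin hs) := by
    ext m
    simp only [Finset.mem_filter, Finset.mem_image, Finset.mem_univ, true_and]
    constructor
    · rintro ⟨hm, hlt⟩
      refine ⟨(s.orderIsoOfFin hs).symm ⟨m, hm⟩, ?_, ?_⟩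
      · have hap : s.orderEmbOfFin hs ((s.orderIsoOfFin hs).symm ⟨m, hm⟩) = m := by
          rw [← Finset.coe_orderIsoOfFin_apply, OrderIso.apply_symm_apply]
        rw [← hap] at hlt
        exact (s.orderEmbOfFin hs).strictMono.lt_iff_lt.mp hlt
      · rw [← Finset.coe_orderIsoOfFin_apply, OrderIso.apply_symm_apply]
    · rintro ⟨a, ha, rfl⟩
      exact ⟨Finset.orderEmbOfFin_mem s hs a, (s.orderEmbOfFin hs).strictMono ha⟩
  rw [himg, Finset.card_image_of_injective _ (s.orderEmbOfFin hs).injective]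
  have : Finset.univ.filter (fun a : Fin n => a < i) = Finset.Iio i := by ext a; simp
  rw [this, Fin.card_Iio]

lemma lapB_zero (u : Matrix (Fin d) (Fin d) ℂ) {n : ℕ} {t t' : Finset (Fin d)}
    (ht : t.card = n) (ht' : t'.card = n+1) {j : Fin d} (hj : j ∈ t) :
    (Matrix.of fun a b : Fin (n+1) =>
      u (Fin.cases j (fun a' => t.orderEmbOfFin ht a') a) (t'.orderEmbOfFin ht' b)).det = 0 := by
  set a0 : Fin n := (t.orderIsoOfFin ht).symm ⟨j, hj⟩ with ha0def
  have ha0 : t.orderEmbOfFin ht a0 = j := by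
    rw [← Finset.coe_orderIsoOfFin_apply, ha0def, OrderIso.apply_symm_apply]
  refine Matrix.det_zero_of_row_eq (i := 0) (j := a0.succ) (Fin.succ_ne_zero a0).symm ?_
  funext b
  simp [ha0]

lemma lapB_insert (u : Matrix (Fin d) (Fin d) ℂ) {n : ℕ} {t t' : Finset (Fin d)}
    (ht : t.card = n) (ht' : t'.card = n+1) {j : Fin d} (hj : j ∉ t) :
    (Matrix.of fun a b : Fin (n+1) =>
      u (Fin.cases j (fun a' => t.orderEmbOfFin ht a') a) (t'.orderEmbOfFin ht' b)).det
    = (-1 : ℂ) ^ ((t.filter (fun m => m < j)).card) * subdet u (insert j t) t' := by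
  classical
  set s : Finset (Fin d) := insert j t with hsdef
  have hjs : j ∈ s := Finset.mem_insert_self j t
  have hs : s.card = n + 1 := by rw [hsdef, Finset.card_insert_of_notMem hj, ht]
  set i : Fin (n+1) := (s.orderIsoOfFin hs).symm ⟨j, hjs⟩ with hidef
  have hij : s.orderEmbOfFin hs i = j := by
    rw [← Finset.coe_orderIsoOfFin_apply, hidef, OrderIso.apply_symm_apply]
  have hse : s.erase j = t := by rw [hsdef, Finset.erase_insert hj]
  have he : (s.erase j).card = n := by rw [hse, ht]
  have hB : (Matrix.of fun a b : Fin (n+1) =>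
        u (Fin.cases j (fun a' => t.orderEmbOfFin ht a') a) (t'.orderEmbOfFin ht' b))
      = (Matrix.of fun a b : Fin (n+1) =>
          u (s.orderEmbOfFin hs a) (t'.orderEmbOfFin ht' b)).submatrix (i.cycleRange.symm) id := by
    funext a b
    simp only [Matrix.submatrix_apply, Matrix.of_apply, id]
    induction a using Fin.cases with
    | zero => rw [Fin.cases_zero, Fin.cycleRange_symm_zero, hij]
    | succ a' =>
        rw [Fin.cases_succ, Fin.cycleRange_symm_succ]
        rw [← orderEmbOfFin_erase hs hjs hij he a']
        exact congrArg (fun z => u z _) (orderEmbOfFin_congr hse he ht a').symm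
  rw [hB, Matrix.det_permute]
  have hsign : Equiv.Perm.sign i.cycleRange.symm = (-1 : ℤˣ) ^ (i : ℕ) := by
    rw [Equiv.Perm.sign_symm, Fin.sign_cycleRange]
  have hexp : ((s.filter (fun m => m < j)).card) = (i : ℕ) := by
    rw [← hij]; exact card_filter_lt_orderEmbOfFin hs i
  have hfil : s.filter (fun m => m < j) = t.filter (fun m => m < j) := by
    rw [hsdef, Finset.filter_insert, if_neg (lt_irrefl j)]
  rw [subdet_eq u hs ht']
  rw [hsign]
  rw [← hfil, hexp]
  push_cast
  ring

lemma sum_orderEmb {t : Finset (Fin d)} {n : ℕ} (ht : t.card = n) (F : Fin d → ℂ) :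
    ∑ l ∈ t, F l = ∑ b : Fin n, F (t.orderEmbOfFin ht b) := by
  rw [← Finset.sum_coe_sort t F]
  exact (Fintype.sum_equiv (t.orderIsoOfFin ht).toEquiv
    (fun b => F (t.orderEmbOfFin ht b)) (fun x => F x)
    (fun b => by simp [← Finset.coe_orderIsoOfFin_apply])).symm

lemma lapB_expand (u : Matrix (Fin d) (Fin d) ℂ) {n : ℕ} {t t' : Finset (Fin d)}
    (ht : t.card = n) (ht' : t'.card = n + 1) (j : Fin d) :
    (Matrix.of fun a b : Fin (n+1) =>
      u (Fin.cases j (fun a' => t.orderEmbOfFin ht a') a) (t'.orderEmbOfFin ht' b)).det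
    = ∑ l ∈ t', (-1 : ℂ) ^ ((t'.filter (fun m => m < l)).card) * u j l
        * subdet u t (t'.erase l) := by
  classical
  rw [Matrix.det_succ_row_zero]
  rw [sum_orderEmb ht' (fun l => (-1 : ℂ) ^ ((t'.filter (fun m => m < l)).card) * u j l
        * subdet u t (t'.erase l))]
  refine Finset.sum_congr rfl (fun b _ => ?_)
  have hmem : t'.orderEmbOfFin ht' b ∈ t' := Finset.orderEmbOfFin_mem t' ht' b
  have hcard : (t'.erase (t'.orderEmbOfFin ht' b)).card = n := by
    rw [Finset.card_erase_of_mem hmem, ht']; omega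
  have hsub : ((Matrix.of fun a b' : Fin (n+1) =>
      u (Fin.cases j (fun a' => t.orderEmbOfFin ht a') a)
        (t'.orderEmbOfFin ht' b')).submatrix Fin.succ b.succAbove)
      = Matrix.of fun a b' : Fin n => u (t.orderEmbOfFin ht a)
          ((t'.erase (t'.orderEmbOfFin ht' b)).orderEmbOfFin hcard b') := by
    funext a b'
    simp only [Matrix.submatrix_apply, Matrix.of_apply, Fin.cases_succ]
    rw [orderEmbOfFin_erase ht' hmem rfl hcard b']
  rw [hsub, ← subdet_eq u ht hcard]
  rw [card_filter_lt_orderEmbOfFin ht' b]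
  simp only [Matrix.of_apply, Fin.cases_zero]



def FockAct (u : Matrix (Fin d) (Fin d) ℂ) (x : Finset (Fin d) → ℂ) : Finset (Fin d) → ℂ :=
  fun s => ∑ t : Finset (Fin d), subdet u s t * x t

def SuppOn (n : ℕ) (x : Finset (Fin d) → ℂ) : Prop :=
  ∀ s : Finset (Fin d), s.card ≠ n → x s = 0

lemma sum_erase_reindex (k : Fin d) (g : Finset (Fin d) → ℂ) (h0 : ∀ s, k ∈ s → g s = 0) :
    ∑ s : Finset (Fin d), g s
      = ∑ t ∈ Finset.univ.filter (fun t : Finset (Fin d) => k ∈ t), g (t.erase k) := by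
  classical
  rw [← Finset.sum_filter_add_sum_filter_not Finset.univ (fun s => k ∉ s) g]
  have h2 : ∑ s ∈ Finset.univ.filter (fun s : Finset (Fin d) => ¬ k ∉ s), g s = 0 :=
    Finset.sum_eq_zero fun s hs => h0 s (not_not.mp (by simpa using (Finset.mem_filter.mp hs).2))
  rw [h2, add_zero]
  refine Finset.sum_bij' (fun s _ => insert k s) (fun t _ => t.erase k) ?_ ?_ ?_ ?_ ?_
  · intro s hs
    simp
  · intro t ht
    simp
  · intro s hs
    exact Finset.erase_insert (by simpa using (Finset.mem_filter.mp hs).2)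
  · intro t ht
    exact Finset.insert_erase (by simpa using (Finset.mem_filter.mp ht).2)
  · intro s hs
    rw [Finset.erase_insert (by simpa using (Finset.mem_filter.mp hs).2)]

lemma annih_FockAct (u : Matrix (Fin d) (Fin d) ℂ) (j : Fin d) (x : Finset (Fin d) → ℂ)
    (t : Finset (Fin d)) :
    annih j (FockAct u x) t = ∑ l : Fin d, u j l * FockAct u (annih l x) t := by
  classical
  have hsub0 : ∀ (t' : Finset (Fin d)) (l : Fin d), l ∈ t' → t'.card ≠ t.card + 1 →
      subdet u t (t'.erase l) = 0 := by
    intro t' l hl hcard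
    apply subdet_ne
    rw [Finset.card_erase_of_mem hl]
    intro h
    apply hcard
    have : 1 ≤ t'.card := Finset.card_pos.mpr ⟨l, hl⟩
    omega
  have step1 : ∀ l : Fin d, u j l * FockAct u (annih l x) t
      = ∑ t' : Finset (Fin d), (if l ∈ t' then
          x t' * ((-1 : ℂ) ^ ((t'.filter (fun m => m < l)).card) * u j l
            * subdet u t (t'.erase l)) else 0) := by
    intro l
    rw [FockAct, Finset.mul_sum]
    rw [sum_erase_reindex l (fun r => u j l * (subdet u t r * annih l x r))
      (fun r hr => by simp [annih, hr])]
    rw [Finset.sum_filter]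
    refine Finset.sum_congr rfl (fun t' _ => ?_)
    by_cases hl : l ∈ t'
    · rw [if_pos hl, if_pos hl]
      have hle : l ∉ t'.erase l := Finset.notMem_erase l t'
      have hfil : (t'.erase l).filter (fun m => m < l) = t'.filter (fun m => m < l) := by
        rw [Finset.filter_erase]
        exact Finset.erase_eq_of_notMem
          (fun hmem => lt_irrefl l (Finset.mem_filter.mp hmem).2)
      simp only [annih, if_neg hle, hfil, Finset.insert_erase hl]
      ring
    · rw [if_neg hl, if_neg hl]
  have hRHS : ∑ l : Fin d, u j l * FockAct u (annih l x) t
      = ∑ t' : Finset (Fin d), x t' *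
          ∑ l ∈ t', (-1 : ℂ) ^ ((t'.filter (fun m => m < l)).card) * u j l
            * subdet u t (t'.erase l) := by
    calc ∑ l : Fin d, u j l * FockAct u (annih l x) t
        = ∑ l : Fin d, ∑ t' : Finset (Fin d), (if l ∈ t' then
            x t' * ((-1 : ℂ) ^ ((t'.filter (fun m => m < l)).card) * u j l
              * subdet u t (t'.erase l)) else 0) :=
          Finset.sum_congr rfl (fun l _ => step1 l)
      _ = ∑ t' : Finset (Fin d), ∑ l : Fin d, (if l ∈ t' then
            x t' * ((-1 : ℂ) ^ ((t'.filter (fun m => m < l)).card) * u j l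
              * subdet u t (t'.erase l)) else 0) := Finset.sum_comm
      _ = ∑ t' : Finset (Fin d), x t' *
            ∑ l ∈ t', (-1 : ℂ) ^ ((t'.filter (fun m => m < l)).card) * u j l
              * subdet u t (t'.erase l) := by
          refine Finset.sum_congr rfl (fun t' _ => ?_)
          rw [Finset.sum_ite_mem, Finset.univ_inter, Finset.mul_sum]
  rw [hRHS]
  by_cases hj : j ∈ t
  · simp only [annih, if_pos hj]
    symm
    refine Finset.sum_eq_zero fun t' _ => ?_
    by_cases hc : t'.card = t.card + 1
    · rw [← lapB_expand u rfl hc j, lapB_zero u rfl hc hj, mul_zero]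
    · rw [Finset.sum_eq_zero, mul_zero]
      intro l hl
      rw [hsub0 t' l hl hc]
      ring
  · have hins : (insert j t).card = t.card + 1 := Finset.card_insert_of_notMem hj
    simp only [annih, if_neg hj, FockAct]
    rw [Finset.mul_sum]
    refine Finset.sum_congr rfl fun t' _ => ?_
    by_cases hc : t'.card = t.card + 1
    · rw [← lapB_expand u rfl hc j, lapB_insert u rfl hc hj]
      ring
    · have h1 : subdet u (insert j t) t' = 0 := subdet_ne u (by rw [hins]; exact hc)
      have h2 : ∑ l ∈ t', (-1 : ℂ) ^ ((t'.filter (fun m => m < l)).card) * u j l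
            * subdet u t (t'.erase l) = 0 :=
        Finset.sum_eq_zero fun l hl => by rw [hsub0 t' l hl hc]; ring
      rw [h1, h2]
      ring


lemma suppOn_annih {n : ℕ} {x : Finset (Fin d) → ℂ} (hx : SuppOn (n+1) x) (l : Fin d) :
    SuppOn n (annih l x) := by
  intro s hs
  simp only [annih]
  by_cases hl : l ∈ s
  · rw [if_pos hl]
  · rw [if_neg hl, hx (insert l s)
      (by rw [Finset.card_insert_of_notMem hl]; omega), mul_zero]

lemma suppOn_fockAct {n : ℕ} {x : Finset (Fin d) → ℂ} (hx : SuppOn n x)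
    (u : Matrix (Fin d) (Fin d) ℂ) : SuppOn n (FockAct u x) := by
  intro s hs
  refine Finset.sum_eq_zero fun t _ => ?_
  by_cases hc : t.card = s.card
  · rw [hx t (by omega), mul_zero]
  · rw [subdet_ne u hc, zero_mul]

lemma fockAct_suppOn_zero {x : Finset (Fin d) → ℂ} (hx : SuppOn 0 x)
    (u : Matrix (Fin d) (Fin d) ℂ) : FockAct u x = x := by
  classical
  funext s
  rw [FockAct]
  rw [Finset.sum_eq_single ∅]
  · by_cases hs : s.card = 0
    · have hse : s = ∅ := Finset.card_eq_zero.mp hs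
      subst hse
      have h1 : subdet u (∅ : Finset (Fin d)) ∅ = 1 := by
        rw [subdet_eq u (Finset.card_empty) (Finset.card_empty), Matrix.det_fin_zero]
      rw [h1, one_mul]
    · rw [hx s hs, subdet_ne u (by simpa using Ne.symm hs), zero_mul]
  · intro t _ ht
    rw [hx t (fun h => ht (Finset.card_eq_zero.mp h)), mul_zero]
  · intro h
    exact absurd (Finset.mem_univ ∅) h

lemma create_annih_apply (j : Fin d) (x : Finset (Fin d) → ℂ) (s : Finset (Fin d)) :
    create j (annih j x) s = if j ∈ s then x s else 0 := create_annih_same j x s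

lemma sum_finner_create_annih {n : ℕ} (x y : Finset (Fin d) → ℂ) (hy : SuppOn n y) :
    ∑ j : Fin d, finner x (create j (annih j y)) = (n : ℂ) * finner x y := by
  classical
  calc ∑ j : Fin d, finner x (create j (annih j y))
      = ∑ j : Fin d, ∑ s : Finset (Fin d), star (x s) * (if j ∈ s then y s else 0) := by
        refine Finset.sum_congr rfl fun j _ => Finset.sum_congr rfl fun s _ => ?_
        rw [create_annih_same]
    _ = ∑ s : Finset (Fin d), ∑ j : Fin d, star (x s) * (if j ∈ s then y s else 0) :=
        Finset.sum_comm
    _ = ∑ s : Finset (Fin d), (s.card : ℂ) * (star (x s) * y s) := by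
        refine Finset.sum_congr rfl fun s _ => ?_
        rw [← Finset.mul_sum]
        have : ∑ j : Fin d, (if j ∈ s then y s else 0) = (s.card : ℂ) * y s := by
          rw [Finset.sum_ite_mem, Finset.univ_inter, Finset.sum_const, nsmul_eq_mul]
        rw [this]
        ring
    _ = (n : ℂ) * finner x y := by
        rw [finner, Finset.mul_sum]
        refine Finset.sum_congr rfl fun s _ => ?_
        by_cases hs : s.card = n
        · rw [hs]
        · rw [hy s hs]
          ring

lemma finner_sum_sum {ι : Type*} [Fintype ι] (a b : ι → ℂ)
    (X Y : ι → Finset (Fin d) → ℂ) :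
    finner (fun t => ∑ p : ι, a p * X p t) (fun t => ∑ q : ι, b q * Y q t)
      = ∑ p : ι, ∑ q : ι, star (a p) * b q * finner (X p) (Y q) := by
  classical
  simp only [finner, star_sum, star_mul', Finset.sum_mul, Finset.mul_sum]
  rw [Finset.sum_comm]
  conv_lhs => enter [2,q]; rw [Finset.sum_comm]
  conv_rhs => rw [Finset.sum_comm]
  refine Finset.sum_congr rfl fun q _ => Finset.sum_congr rfl fun p _ =>
    Finset.sum_congr rfl fun s _ => by ring

lemma fockAct_isometry (u : Matrix (Fin d) (Fin d) ℂ) (hu : uᴴ * u = 1) :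
    ∀ (n : ℕ) (x y : Finset (Fin d) → ℂ), SuppOn n x → SuppOn n y →
      finner (FockAct u x) (FockAct u y) = finner x y := by
  classical
  intro n
  induction n with
  | zero =>
    intro x y hx hy
    rw [fockAct_suppOn_zero hx u, fockAct_suppOn_zero hy u]
  | succ n ih =>
    intro x y hx hy
    have hUy : SuppOn (n+1) (FockAct u y) := suppOn_fockAct hy u
    have key : ((n : ℂ) + 1) * finner (FockAct u x) (FockAct u y)
        = ((n : ℂ) + 1) * finner x y := by
      have e1 : ((n : ℂ) + 1) * finner (FockAct u x) (FockAct u y)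
          = ∑ j : Fin d, finner (FockAct u x) (create j (annih j (FockAct u y))) := by
        rw [sum_finner_create_annih _ _ hUy]
        push_cast
        ring
      rw [e1]
      calc ∑ j : Fin d, finner (FockAct u x) (create j (annih j (FockAct u y)))
          = ∑ j : Fin d, ∑ p : Fin d, ∑ q : Fin d, star (u j p) * u j q
              * finner (FockAct u (annih p x)) (FockAct u (annih q y)) := by
            refine Finset.sum_congr rfl fun j _ => ?_
            rw [finner_create j _ _]
            have hx' : annih j (FockAct u x)
                = fun t => ∑ p : Fin d, u j p * FockAct u (annih p x) t :=
              funext (annih_FockAct u j x)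
            have hy' : annih j (FockAct u y)
                = fun t => ∑ q : Fin d, u j q * FockAct u (annih q y) t :=
              funext (annih_FockAct u j y)
            rw [hx', hy', finner_sum_sum]
        _ = ∑ p : Fin d, ∑ q : Fin d, (∑ j : Fin d, star (u j p) * u j q)
              * finner (FockAct u (annih p x)) (FockAct u (annih q y)) := by
            rw [Finset.sum_comm]
            refine Finset.sum_congr rfl fun p _ => ?_
            rw [Finset.sum_comm]
            refine Finset.sum_congr rfl fun q _ => ?_
            rw [Finset.sum_mul]
        _ = ∑ p : Fin d, ∑ q : Fin d, (if p = q then (1:ℂ) else 0)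
              * finner (FockAct u (annih p x)) (FockAct u (annih q y)) := by
            refine Finset.sum_congr rfl fun p _ => Finset.sum_congr rfl fun q _ => ?_
            congr 1
            have huv : (uᴴ * u) p q = ∑ j : Fin d, star (u j p) * u j q := by
              simp [Matrix.mul_apply, Matrix.conjTranspose_apply]
            rw [← huv, hu, Matrix.one_apply]
        _ = ∑ p : Fin d, finner (FockAct u (annih p x)) (FockAct u (annih p y)) := by
            refine Finset.sum_congr rfl fun p _ => ?_
            have : ∀ q : Fin d, (if p = q then (1:ℂ) else 0)
                * finner (FockAct u (annih p x)) (FockAct u (annih q y))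
                = if p = q then finner (FockAct u (annih p x)) (FockAct u (annih q y))
                  else 0 := by
              intro q; split <;> simp
            rw [Finset.sum_congr rfl (fun q _ => this q), Finset.sum_ite_eq]
            rw [if_pos (Finset.mem_univ p)]
        _ = ∑ p : Fin d, finner (annih p x) (annih p y) := by
            refine Finset.sum_congr rfl fun p _ =>
              ih _ _ (suppOn_annih hx p) (suppOn_annih hy p)
        _ = ∑ p : Fin d, finner x (create p (annih p y)) := by
            refine Finset.sum_congr rfl fun p _ => (finner_create p x (annih p y)).symm
        _ = ((n : ℂ) + 1) * finner x y := by
            rw [sum_finner_create_annih x y hy]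
            push_cast
            ring
    have hne : ((n : ℂ) + 1) ≠ 0 := by
      have h9 : (((n+1 : ℕ)) : ℂ) ≠ 0 := Nat.cast_ne_zero.mpr (Nat.succ_ne_zero n)
      push_cast at h9
      exact h9
    exact mul_left_cancel₀ hne key


lemma star_mul_self_eq (w : ℂ) : star w * w = ((‖w‖^2 : ℝ) : ℂ) := by
  rw [Complex.star_def, Complex.conj_mul']
  push_cast
  ring

lemma sum_orderEmb' {M : Type*} [AddCommMonoid M] {t : Finset (Fin d)} {n : ℕ}
    (ht : t.card = n) (F : Fin d → M) :
    ∑ l ∈ t, F l = ∑ b : Fin n, F (t.orderEmbOfFin ht b) := by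
  rw [← Finset.sum_coe_sort t F]
  exact (Fintype.sum_equiv (t.orderIsoOfFin ht).toEquiv
    (fun b => F (t.orderEmbOfFin ht b)) (fun x => F x)
    (fun b => by simp [← Finset.coe_orderIsoOfFin_apply])).symm

lemma suppOn_embed {N : ℕ} (c : CoeffVec N d) : SuppOn N (embed c) := by
  intro s hs
  simp only [embed]
  rw [dif_neg hs]

lemma sum_config_eq {N : ℕ} (F : Finset (Fin d) → ℂ) (hF : ∀ s, s.card ≠ N → F s = 0) :
    ∑ s : Finset (Fin d), F s = ∑ s : Config N d, F s.val := by
  classical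
  rw [← Finset.sum_filter_add_sum_filter_not Finset.univ
    (fun s : Finset (Fin d) => s.card = N) F]
  have h2 : ∑ s ∈ Finset.univ.filter (fun s : Finset (Fin d) => ¬ s.card = N), F s = 0 :=
    Finset.sum_eq_zero fun s hs => hF s (by simpa using (Finset.mem_filter.mp hs).2)
  rw [h2, add_zero]
  exact Finset.sum_subtype _ (fun s => by simp) F

lemma embed_compAct {N : ℕ} (u : Matrix (Fin d) (Fin d) ℂ) (c : CoeffVec N d) :
    embed (compAct u c) = FockAct u (embed c) := by
  classical
  funext s
  by_cases hs : s.card = N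
  · simp only [embed]
    rw [dif_pos hs, FockAct]
    rw [sum_config_eq (fun t => subdet u s t * embed c t)
      (fun t ht => by simp only [embed]; rw [dif_neg ht, mul_zero])]
    rw [compAct]
    refine Finset.sum_congr rfl fun t _ => ?_
    congr 1
    · rw [subdet_eq u hs t.2]
      congr 1
    · simp only [embed]
      rw [dif_pos t.2]
  · simp only [embed]
    rw [dif_neg hs]
    exact (suppOn_fockAct (suppOn_embed c) u s hs).symm

lemma rho1_apply {N : ℕ} (c : CoeffVec N d) (j k : Fin d) :
    rho1 c j k = finner (embed c) (create k (annih j (embed c))) := rfl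

lemma rho1_adj {N : ℕ} (c : CoeffVec N d) (j k : Fin d) :
    rho1 c j k = finner (annih k (embed c)) (annih j (embed c)) := by
  rw [rho1_apply, finner_create]

lemma rho1_isHermitian {N : ℕ} (c : CoeffVec N d) : (rho1 c).IsHermitian := by
  show (rho1 c)ᴴ = rho1 c
  funext j k
  rw [Matrix.conjTranspose_apply, rho1_adj, rho1_adj, star_finner]

lemma rho1_diag_eq_occ {N : ℕ} (c : CoeffVec N d) (j : Fin d) :
    rho1 c j j = ((occ c j : ℝ) : ℂ) := by
  classical
  rw [rho1_apply, finner]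
  have h1 : ∀ s : Finset (Fin d), star (embed c s) * create j (annih j (embed c)) s
      = if j ∈ s then ((‖embed c s‖^2 : ℝ) : ℂ) else 0 := by
    intro s
    rw [create_annih_same]
    by_cases hj : j ∈ s
    · rw [if_pos hj, if_pos hj, star_mul_self_eq]
    · rw [if_neg hj, if_neg hj, mul_zero]
  rw [Finset.sum_congr rfl (fun s _ => h1 s)]
  rw [sum_config_eq (fun s => if j ∈ s then ((‖embed c s‖^2 : ℝ) : ℂ) else 0)
    (fun s hsc => by simp only [embed]; rw [dif_neg hsc]; simp)]
  rw [occ, Complex.ofReal_sum]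
  refine Finset.sum_congr rfl fun s _ => ?_
  simp only [embed]
  rw [dif_pos s.2]
  split <;> simp

lemma occ_eq_re_rho1 {N : ℕ} (c : CoeffVec N d) (j : Fin d) :
    occ c j = (rho1 c j j).re := by
  rw [rho1_diag_eq_occ, Complex.ofReal_re]

lemma rho1_compAct {N : ℕ} (u : Matrix (Fin d) (Fin d) ℂ) (hu : uᴴ * u = 1) (hN : 1 ≤ N)
    (c : CoeffVec N d) : rho1 (compAct u c) = u * rho1 c * uᴴ := by
  classical
  funext j k
  rw [rho1_adj, embed_compAct]
  have hx' : annih k (FockAct u (embed c))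
      = fun t => ∑ q : Fin d, u k q * FockAct u (annih q (embed c)) t :=
    funext (annih_FockAct u k (embed c))
  have hy' : annih j (FockAct u (embed c))
      = fun t => ∑ p : Fin d, u j p * FockAct u (annih p (embed c)) t :=
    funext (annih_FockAct u j (embed c))
  rw [hx', hy', finner_sum_sum]
  obtain ⟨n, hn⟩ : ∃ n, N = n + 1 := ⟨N - 1, by omega⟩
  have hsupp : ∀ q : Fin d, SuppOn n (annih q (embed c)) := fun q =>
    suppOn_annih (by rw [← hn]; exact suppOn_embed c) q
  have hL : ∀ q p : Fin d,
      star (u k q) * u j p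
        * finner (FockAct u (annih q (embed c))) (FockAct u (annih p (embed c)))
      = star (u k q) * u j p * rho1 c p q := by
    intro q p
    rw [fockAct_isometry u hu n _ _ (hsupp q) (hsupp p), rho1_adj]
  rw [Finset.sum_congr rfl (fun q _ => Finset.sum_congr rfl (fun p _ => hL q p))]
  simp only [Matrix.mul_apply, Matrix.conjTranspose_apply]
  refine Finset.sum_congr rfl fun q _ => ?_
  rw [Finset.sum_mul]
  refine Finset.sum_congr rfl fun p _ => by ring

lemma rho1_block {N : ℕ} (κ0 : ℝ) (κ : Fin d → ℝ) (c : CoeffVec N d)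
    (hsupp : ∀ s : Config N d, c s ≠ 0 → κ0 + ∑ j ∈ s.val, κ j = 0)
    {j k : Fin d} (hjk : κ j ≠ κ k) : rho1 c j k = 0 := by
  classical
  rw [rho1_apply, finner]
  refine Finset.sum_eq_zero fun s _ => ?_
  by_contra hne
  have hxs : embed c s ≠ 0 := fun h => hne (by rw [h, star_zero, zero_mul])
  have hcs : create k (annih j (embed c)) s ≠ 0 := fun h => hne (by rw [h, mul_zero])
  have hk : k ∈ s := by
    by_contra hk
    exact hcs (by simp [create, hk])
  have h2 : annih j (embed c) (s.erase k) ≠ 0 := by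
    intro h
    exact hcs (by simp [create, hk, h])
  have hj : j ∉ s.erase k := by
    by_contra hj'
    exact h2 (by simp [annih, hj'])
  have h3 : embed c (insert j (s.erase k)) ≠ 0 := by
    intro h
    exact h2 (by simp [annih, hj, h])
  have hsN : s.card = N := by
    by_contra h
    exact hxs (by simp only [embed]; rw [dif_neg h])
  have hs'N : (insert j (s.erase k)).card = N := by
    by_contra h
    exact h3 (by simp only [embed]; rw [dif_neg h])
  have hcs0 : c ⟨s, hsN⟩ ≠ 0 := by
    simp only [embed] at hxs
    rw [dif_pos hsN] at hxs
    exact hxs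
  have hcs1 : c ⟨insert j (s.erase k), hs'N⟩ ≠ 0 := by
    simp only [embed] at h3
    rw [dif_pos hs'N] at h3
    exact h3
  have e1 := hsupp ⟨s, hsN⟩ hcs0
  have e2 := hsupp ⟨insert j (s.erase k), hs'N⟩ hcs1
  simp only at e1 e2
  have hsum1 : κ k + ∑ m ∈ s.erase k, κ m = ∑ m ∈ s, κ m :=
    Finset.add_sum_erase s κ hk
  have hsum2 : ∑ m ∈ insert j (s.erase k), κ m = κ j + ∑ m ∈ s.erase k, κ m :=
    Finset.sum_insert hj
  apply hjk
  rw [hsum2] at e2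
  linarith

lemma compAct_support {N : ℕ} (u : Matrix (Fin d) (Fin d) ℂ) (κ0 : ℝ) (κ : Fin d → ℝ)
    (hub : ∀ j l : Fin d, κ j ≠ κ l → u j l = 0) (c : CoeffVec N d)
    (hsupp : ∀ s : Config N d, c s ≠ 0 → κ0 + ∑ j ∈ s.val, κ j = 0)
    (s : Config N d) (hne : compAct u c s ≠ 0) : κ0 + ∑ j ∈ s.val, κ j = 0 := by
  classical
  rw [compAct] at hne
  obtain ⟨t, -, hprod⟩ := Finset.exists_ne_zero_of_sum_ne_zero hne
  obtain ⟨hdet, hct⟩ := mul_ne_zero_iff.mp hprod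
  rw [Matrix.det_apply'] at hdet
  obtain ⟨σ, -, hterm⟩ := Finset.exists_ne_zero_of_sum_ne_zero hdet
  have hprodne : (∏ i : Fin N, (Matrix.of fun a b : Fin N =>
      u (↑(s.val.orderIsoOfFin s.2 a)) (↑(t.val.orderIsoOfFin t.2 b))) (σ i) i) ≠ 0 :=
    fun h => hterm (by rw [h, mul_zero])
  have hfac := Finset.prod_ne_zero_iff.mp hprodne
  have hκ : ∀ i : Fin N, κ (↑(s.val.orderIsoOfFin s.2 (σ i))) = κ (↑(t.val.orderIsoOfFin t.2 i)) := by
    intro i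
    by_contra hcon
    exact hfac i (Finset.mem_univ i) (hub _ _ hcon)
  have hsum : ∑ m ∈ s.val, κ m = ∑ m ∈ t.val, κ m := by
    rw [sum_orderEmb' s.2 κ, sum_orderEmb' t.2 κ]
    rw [← Equiv.sum_comp σ (fun b => κ (s.val.orderEmbOfFin s.2 b))]
    refine Finset.sum_congr rfl fun i _ => ?_
    have h1 := hκ i
    rw [Finset.coe_orderIsoOfFin_apply, Finset.coe_orderIsoOfFin_apply] at h1
    exact h1
  rw [hsum]
  exact hsupp t hct



lemma block_spectral (κ : Fin d → ℝ) (H : Matrix (Fin d) (Fin d) ℂ) (hH : H.IsHermitian)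
    (v : ℝ) :
    ∃ (w : Matrix {i : Fin d // κ i = v} {i : Fin d // κ i = v} ℂ)
      (μ : {i : Fin d // κ i = v} → ℝ),
      wᴴ * w = 1 ∧ w * wᴴ = 1 ∧
      (∀ a b : {i : Fin d // κ i = v},
        (w * (H.submatrix Subtype.val Subtype.val) * wᴴ
          : Matrix {i : Fin d // κ i = v} {i : Fin d // κ i = v} ℂ) a b
          = if a = b then ((μ a : ℝ) : ℂ) else 0) ∧
      (∀ a b, a < b → μ b ≤ μ a) := by
  classical
  set B := {i : Fin d // κ i = v} with hB
  set Hv : Matrix B B ℂ := H.submatrix Subtype.val Subtype.val with hHv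
  have hHvHerm : Hv.IsHermitian := hH.submatrix Subtype.val
  set U : Matrix B B ℂ := ↑hHvHerm.eigenvectorUnitary with hUdef
  have hmem := hHvHerm.eigenvectorUnitary.prop
  rw [Unitary.mem_iff] at hmem
  obtain ⟨hU1, hU2⟩ := hmem
  set μ0 : B → ℝ := hHvHerm.eigenvalues with hμ0
  have hspec := hHvHerm.spectral_theorem
  have hD : star U * Hv * U = Matrix.diagonal (fun a : B => ((μ0 a : ℝ) : ℂ)) := by
    rw [hspec, Unitary.conjStarAlgAut_apply]
    have hassoc : star U * (U * Matrix.diagonal (RCLike.ofReal ∘ μ0) * star U) * U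
        = (star U * U) * Matrix.diagonal (RCLike.ofReal ∘ μ0) * (star U * U) := by
      simp only [Matrix.mul_assoc]
    rw [hassoc, hU1, Matrix.one_mul, Matrix.mul_one]
    rfl
  set e := monoEquivOfFin B rfl with he
  set σ := Tuple.sort (fun i : Fin (Fintype.card B) => - μ0 (e i)) with hσ
  have hmon := Tuple.monotone_sort (fun i : Fin (Fintype.card B) => - μ0 (e i))
  set τ : B ≃ B := e.toEquiv.symm.trans (σ.trans e.toEquiv) with hτ
  set w : Matrix B B ℂ := (star U).submatrix (fun a => τ a) id with hw
  have hw1 : wᴴ * w = 1 := by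
    funext p q
    rw [Matrix.mul_apply]
    have hterm : ∀ a, (wᴴ) p a * w a q
        = (fun r => star ((star U) r p) * (star U) r q) (τ a) := by
      intro a
      rw [Matrix.conjTranspose_apply]
      rfl
    rw [Finset.sum_congr rfl fun a _ => hterm a]
    rw [Equiv.sum_comp τ (fun r => star ((star U) r p) * (star U) r q)]
    have h4 : ∑ r : B, star ((star U) r p) * (star U) r q = ((star U)ᴴ * (star U)) p q := by
      rw [Matrix.mul_apply]
      exact Finset.sum_congr rfl fun r _ => by rw [Matrix.conjTranspose_apply]
    rw [h4]
    have h3 : ((star U)ᴴ : Matrix B B ℂ) = U := by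
      rw [← Matrix.star_eq_conjTranspose, star_star]
    rw [h3, hU2]
  refine ⟨w, fun a => μ0 (τ a), hw1, mul_eq_one_comm.mp hw1, ?_, ?_⟩
  · intro a b
    have hentry : (w * Hv * wᴴ) a b = (star U * Hv * U) (τ a) (τ b) := by
      simp only [Matrix.mul_apply, Matrix.conjTranspose_apply, Matrix.submatrix_apply, id_eq, hw]
      refine Finset.sum_congr rfl fun q _ => ?_
      congr 1
      rw [Matrix.star_apply, star_star]
    rw [hentry, hD, Matrix.diagonal_apply]
    by_cases hab : a = b
    · subst hab
      simp
    · rw [if_neg (fun h => hab (τ.injective h)), if_neg hab]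
  · intro a b hab
    have h5 : e.symm a ≤ e.symm b := le_of_lt (by
      exact (OrderIso.lt_iff_lt e.symm).mpr hab)
    have h2 := hmon h5
    have h6 : - μ0 (e (σ (e.symm a))) ≤ - μ0 (e (σ (e.symm b))) := h2
    have h7 : μ0 (τ b) = μ0 (e (σ (e.symm b))) := rfl
    have h8 : μ0 (τ a) = μ0 (e (σ (e.symm a))) := rfl
    show μ0 (τ b) ≤ μ0 (τ a)
    rw [h7, h8]
    linarith


lemma sum_dite_subtype (p : Fin d → Prop) [DecidablePred p] (f : {m : Fin d // p m} → ℂ) :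
    (∑ m : Fin d, if hm : p m then f ⟨m, hm⟩ else 0) = ∑ a : {m : Fin d // p m}, f a := by
  classical
  rw [← Finset.sum_filter_add_sum_filter_not Finset.univ p
    (fun m => if hm : p m then f ⟨m, hm⟩ else 0)]
  have h2 : ∑ m ∈ Finset.univ.filter (fun m => ¬ p m),
      (if hm : p m then f ⟨m, hm⟩ else 0) = 0 :=
    Finset.sum_eq_zero fun m hm => dif_neg (by simpa using (Finset.mem_filter.mp hm).2)
  rw [h2, add_zero]
  rw [Finset.sum_subtype (p := p) (Finset.univ.filter p) (fun m => by simp)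
    (fun m => if hm : p m then f ⟨m, hm⟩ else 0)]
  refine Finset.sum_congr rfl fun a _ => ?_
  rw [dif_pos a.2]

lemma exists_block_unitary (κ : Fin d → ℝ) (H : Matrix (Fin d) (Fin d) ℂ)
    (hH : H.IsHermitian) (hblk : ∀ j k : Fin d, κ j ≠ κ k → H j k = 0) :
    ∃ u : Matrix (Fin d) (Fin d) ℂ,
      uᴴ * u = 1 ∧ u * uᴴ = 1 ∧
      (∀ j l : Fin d, κ j ≠ κ l → u j l = 0) ∧
      (∀ j k : Fin d, j ≠ k → (u * H * uᴴ) j k = 0) ∧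
      (∀ j l : Fin d, j < l → κ j = κ l →
        ((u * H * uᴴ) l l).re ≤ ((u * H * uᴴ) j j).re) := by
  classical
  choose w μ hw1 hw2 hdiag hmono using block_spectral κ H hH
  set u : Matrix (Fin d) (Fin d) ℂ :=
    Matrix.of (fun j l => if h : κ j = κ l then w (κ l) ⟨j, h⟩ ⟨l, rfl⟩ else 0) with hu
  have hu_apply : ∀ (jj ll : Fin d) (vv : ℝ) (hj : κ jj = vv) (hl : κ ll = vv),
      u jj ll = w vv ⟨jj, hj⟩ ⟨ll, hl⟩ := by
    intro jj ll vv hj hl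
    subst hl
    simp only [hu, Matrix.of_apply]
    rw [dif_pos hj]
  have hu_zero : ∀ jj ll : Fin d, κ jj ≠ κ ll → u jj ll = 0 := by
    intro jj ll h
    simp only [hu, Matrix.of_apply]
    rw [dif_neg h]
  have huu : uᴴ * u = 1 := by
    funext j l
    rw [Matrix.mul_apply]
    by_cases h : κ j = κ l
    · have hterm : ∀ m : Fin d, (uᴴ) j m * u m l
          = (if hm : κ m = κ l then
              star (w (κ l) ⟨m, hm⟩ ⟨j, h⟩) * w (κ l) ⟨m, hm⟩ ⟨l, rfl⟩ else 0) := by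
        intro m
        rw [Matrix.conjTranspose_apply]
        by_cases hm : κ m = κ l
        · rw [dif_pos hm, hu_apply m j (κ l) hm h, hu_apply m l (κ l) hm rfl]
        · rw [dif_neg hm, hu_zero m j (fun hc => hm (hc.trans h)), star_zero, zero_mul]
      rw [Finset.sum_congr rfl fun m _ => hterm m]
      rw [sum_dite_subtype (fun m => κ m = κ l)
        (fun a => star (w (κ l) a ⟨j, h⟩) * w (κ l) a ⟨l, rfl⟩)]
      have hmm : ∑ a : {m : Fin d // κ m = κ l},
            star (w (κ l) a ⟨j, h⟩) * w (κ l) a ⟨l, rfl⟩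
          = ((w (κ l))ᴴ * w (κ l)) ⟨j, h⟩ ⟨l, rfl⟩ := by
        rw [Matrix.mul_apply]
        exact Finset.sum_congr rfl fun a _ => by rw [Matrix.conjTranspose_apply]
      rw [hmm, hw1 (κ l), Matrix.one_apply, Matrix.one_apply]
      by_cases hjl : j = l
      · subst hjl
        rw [if_pos rfl, if_pos rfl]
      · rw [if_neg (fun hc : (⟨j, h⟩ : {m : Fin d // κ m = κ l}) = ⟨l, rfl⟩ =>
          hjl (congrArg Subtype.val hc)), if_neg hjl]
    · have hterm0 : ∀ m : Fin d, (uᴴ) j m * u m l = 0 := by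
        intro m
        rw [Matrix.conjTranspose_apply]
        by_cases hm : κ m = κ l
        · rw [hu_zero m j (fun hc => h ((hc.symm).trans hm)), star_zero, zero_mul]
        · rw [hu_zero m l hm, mul_zero]
      rw [Finset.sum_eq_zero fun m _ => hterm0 m, Matrix.one_apply,
        if_neg (fun hc => h (by rw [hc]))]
  have hentry : ∀ (vv : ℝ) (j k : Fin d) (hj : κ j = vv) (hk : κ k = vv),
      (u * H * uᴴ) j k
        = (w vv * (H.submatrix Subtype.val Subtype.val) * (w vv)ᴴ
            : Matrix {i : Fin d // κ i = vv} {i : Fin d // κ i = vv} ℂ) ⟨j, hj⟩ ⟨k, hk⟩ := by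
    intro vv j k hj hk
    rw [Matrix.mul_apply]
    have hsA : ∀ q : Fin d, (u * H) j q * (uᴴ) q k
        = (if hq : κ q = vv then
            (∑ a : {i : Fin d // κ i = vv}, w vv ⟨j, hj⟩ a * H ↑a q)
              * star (w vv ⟨k, hk⟩ ⟨q, hq⟩) else 0) := by
      intro q
      rw [Matrix.conjTranspose_apply]
      by_cases hq : κ q = vv
      · rw [dif_pos hq, hu_apply k q vv hk hq, Matrix.mul_apply]
        congr 1
        have hin : ∀ p : Fin d, u j p * H p q
            = (if hp : κ p = vv then w vv ⟨j, hj⟩ ⟨p, hp⟩ * H p q else 0) := by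
          intro p
          by_cases hp : κ p = vv
          · rw [dif_pos hp, hu_apply j p vv hj hp]
          · rw [dif_neg hp, hu_zero j p (fun hc => hp ((hc.symm).trans hj)), zero_mul]
        rw [Finset.sum_congr rfl fun p _ => hin p]
        exact sum_dite_subtype (fun p => κ p = vv)
          (fun a => w vv ⟨j, hj⟩ a * H ↑a q)
      · rw [dif_neg hq, hu_zero k q (fun hc => hq ((hc.symm).trans hk)), star_zero, mul_zero]
    rw [Finset.sum_congr rfl fun q _ => hsA q]
    rw [sum_dite_subtype (fun q => κ q = vv)
      (fun b => (∑ a : {i : Fin d // κ i = vv}, w vv ⟨j, hj⟩ a * H ↑a ↑b)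
        * star (w vv ⟨k, hk⟩ b))]
    simp only [Matrix.mul_apply, Matrix.conjTranspose_apply, Matrix.submatrix_apply]
  have hzero : ∀ j k : Fin d, κ j ≠ κ k → (u * H * uᴴ) j k = 0 := by
    intro j k hjk
    rw [Matrix.mul_apply]
    refine Finset.sum_eq_zero fun q _ => ?_
    by_cases hq : κ q = κ j
    · rw [Matrix.conjTranspose_apply, hu_zero k q (fun hc => hjk ((hc.trans hq).symm)),
        star_zero, mul_zero]
    · rw [Matrix.mul_apply]
      have hin0 : ∀ p : Fin d, u j p * H p q = 0 := by
        intro p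
        by_cases hp : κ p = κ j
        · rw [hblk p q (fun hc => hq ((hc.symm).trans hp)), mul_zero]
        · rw [hu_zero j p (fun hc => hp hc.symm), zero_mul]
      rw [Finset.sum_eq_zero fun p _ => hin0 p, zero_mul]
  have hmain : ∀ (vv : ℝ) (j k : Fin d) (hj : κ j = vv) (hk : κ k = vv),
      (u * H * uᴴ) j k = if j = k then ((μ vv ⟨j, hj⟩ : ℝ) : ℂ) else 0 := by
    intro vv j k hj hk
    rw [hentry vv j k hj hk, hdiag vv ⟨j, hj⟩ ⟨k, hk⟩]
    by_cases hjk : j = k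
    · subst hjk
      rw [if_pos rfl, if_pos rfl]
    · rw [if_neg (fun hc : (⟨j, hj⟩ : {i : Fin d // κ i = vv}) = ⟨k, hk⟩ =>
        hjk (congrArg Subtype.val hc)), if_neg hjk]
  refine ⟨u, huu, mul_eq_one_comm.mp huu, hu_zero, ?_, ?_⟩
  · intro j k hjk
    by_cases h : κ j = κ k
    · rw [hmain (κ k) j k h rfl, if_neg hjk]
    · exact hzero j k h
  · intro j l hjl hκ
    rw [hmain (κ l) j j hκ hκ, hmain (κ l) l l rfl rfl, if_pos rfl, if_pos rfl,
      Complex.ofReal_re, Complex.ofReal_re]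
    exact hmono (κ l) ⟨j, hκ⟩ ⟨l, rfl⟩ (Subtype.mk_lt_mk.mpr hjl)


end Stmt6

/-- Converse selection rule: if every configuration in the support of the nonzero coefficient
vector `c` saturates the constraint `κ₀ + Σ_{j∈s} κ_j = 0`, then there is a unitary `u`,
block-diagonal with respect to the level sets of `κ`, such that `ρ₁(u·c)` is diagonal, the
support of `u·c` still saturates the constraint, and the occupation numbers are ordered
decreasingly within each block of equal `κ`-values. -/
theorem stmt_6 (N d : ℕ) (hN : 1 ≤ N) (hNd : N ≤ d)
    (κ0 : ℝ) (κ : Fin d → ℝ) (c : CoeffVec N d) (hc : c ≠ 0)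
    (hsupp : ∀ s : Config N d, c s ≠ 0 → κ0 + ∑ j ∈ s.val, κ j = 0) :
    ∃ u : Matrix (Fin d) (Fin d) ℂ,
      uᴴ * u = 1 ∧ u * uᴴ = 1 ∧
      (∀ j l : Fin d, κ j ≠ κ l → u j l = 0) ∧
      (∀ j k : Fin d, j ≠ k → rho1 (compAct u c) j k = 0) ∧
      (∀ s : Config N d, compAct u c s ≠ 0 → κ0 + ∑ j ∈ s.val, κ j = 0) ∧
      (∀ j l : Fin d, j < l → κ j = κ l →
        occ (compAct u c) l ≤ occ (compAct u c) j) := by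
  classical
  obtain ⟨u, hu1, hu2, hblk, hdiag, hord⟩ :=
    Stmt6.exists_block_unitary κ (rho1 c) (Stmt6.rho1_isHermitian c)
      (fun j k hjk => Stmt6.rho1_block κ0 κ c hsupp hjk)
  refine ⟨u, hu1, hu2, hblk, ?_, ?_, ?_⟩
  · intro j k hjk
    rw [Stmt6.rho1_compAct u hu1 hN c]
    exact hdiag j k hjk
  · intro s hne
    exact Stmt6.compAct_support u κ0 κ hblk c hsupp s hne
  · intro j l hjl hκ
    rw [Stmt6.occ_eq_re_rho1, Stmt6.occ_eq_re_rho1, Stmt6.rho1_compAct u hu1 hN c]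
    exact hord j l hjl hκ
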